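/- Let b ∈ ℝ, let Γ := {(t, 0) : t ≥ 0} ⊂ ℝ², and for x ∈ ℝ² \ Γ let arg(x) ∈ (0, 2π) be the unique angle with x = |x| (cos(arg x), sin(arg x)). Define ξ : ℝ² \ Γ → ℝ² by ξ(x) := ( x₁ − (b/(2π)) arg(x), x₂ ). Then there exists R₀ > 0 (depending only on b) such that for every R ≥ R₀ the map ξ is injective on the set {x ∈ ℝ² \ Γ : |x| ≥ R/4}. -/

import Mathlib

/-- The Euclidean norm on `ℝ²` (written as `ℝ × ℝ`). -/
noncomputable def nrm2 (x : ℝ × ℝ) : ℝ := Real.sqrt (x.1 ^ 2 + x.2 ^ 2)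

/-- The branch cut `Γ = {(t, 0) : t ≥ 0}`. -/
def branchCut : Set (ℝ × ℝ) := {x | 0 ≤ x.1 ∧ x.2 = 0}

private lemma aux_eq_pi {a : ℝ} (h : a ∈ Set.Ioo 0 (2 * Real.pi))
    (hs : Real.sin a = 0) : a = Real.pi := by
  obtain ⟨n, hn⟩ := Real.sin_eq_zero_iff.mp hs
  have hπ := Real.pi_pos
  have h1 : (0:ℝ) < (n:ℝ) * Real.pi := hn ▸ h.1
  have h2 : (n:ℝ) * Real.pi < 2 * Real.pi := hn ▸ h.2
  have hn0 : 0 < n := by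
    by_contra h'
    push_neg at h'
    have : (n:ℝ) ≤ 0 := by exact_mod_cast h'
    nlinarith
  have hn2 : n < 2 := by
    by_contra h'
    push_neg at h'
    have : (2:ℝ) ≤ (n:ℝ) := by exact_mod_cast h'
    nlinarith
  have : n = 1 := by omega
  rw [← hn, this]
  push_cast
  ring

private lemma aux_lt_pi {a : ℝ} (h : a ∈ Set.Ioo 0 (2 * Real.pi))
    (hs : 0 < Real.sin a) : a < Real.pi := by
  by_contra h'
  push_neg at h'
  have h1 : 0 ≤ Real.sin (a - Real.pi) :=
    Real.sin_nonneg_of_nonneg_of_le_pi (by linarith) (by linarith [h.2])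
  rw [Real.sin_sub_pi] at h1
  linarith

private lemma aux_gt_pi {a : ℝ} (h : a ∈ Set.Ioo 0 (2 * Real.pi))
    (hs : Real.sin a < 0) : Real.pi < a := by
  by_contra h'
  push_neg at h'
  have h1 : 0 ≤ Real.sin a := Real.sin_nonneg_of_nonneg_of_le_pi h.1.le h'
  linarith

set_option maxHeartbeats 1000000 in
private lemma coreAux (b c r1 r2 a1 a2 p1 p2 : ℝ) (hc : 0 < c)
    (hr1 : 2 * (|b| + 1) ≤ r1) (hr2 : 2 * (|b| + 1) ≤ r2)
    (ha1 : a1 ∈ Set.Ioo 0 Real.pi) (ha2 : a2 ∈ Set.Ioo 0 Real.pi)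
    (h1 : r1 * Real.sin a1 = c) (h2 : r2 * Real.sin a2 = c)
    (hp1 : p1 = r1 * Real.cos a1) (hp2 : p2 = r2 * Real.cos a2)
    (heq : p1 - p2 = b / (2 * Real.pi) * (a1 - a2)) (hlt : a1 < a2) : False := by
  have hπ := Real.pi_pos
  have hπ3 := Real.pi_gt_three
  have hb0 := abs_nonneg b
  have hr1p : 0 < r1 := by linarith
  have hr2p : 0 < r2 := by linarith
  have hs1 : 0 < Real.sin a1 := Real.sin_pos_of_pos_of_lt_pi ha1.1 ha1.2
  have hs2 : 0 < Real.sin a2 := Real.sin_pos_of_pos_of_lt_pi ha2.1 ha2.2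
  have h2π : (2 * Real.pi) ≠ 0 := by positivity
  have heq2 : (p1 - p2) * (2 * Real.pi) = b * (a1 - a2) := by
    field_simp at heq
    linarith
  -- the function and MVT
  have hsub : Set.Icc a1 a2 ⊆ Set.Ioo 0 Real.pi := fun θ hθ =>
    ⟨lt_of_lt_of_le ha1.1 hθ.1, lt_of_le_of_lt hθ.2 ha2.2⟩
  have hcont : ContinuousOn (fun θ : ℝ => c * (Real.cos θ / Real.sin θ))
      (Set.Icc a1 a2) := by
    apply continuousOn_const.mul
    apply Real.continuous_cos.continuousOn.div Real.continuous_sin.continuousOn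
    intro θ hθ
    have := hsub hθ
    exact (Real.sin_pos_of_pos_of_lt_pi this.1 this.2).ne'
  have hderiv : ∀ θ ∈ Set.Ioo a1 a2,
      HasDerivAt (fun θ : ℝ => c * (Real.cos θ / Real.sin θ))
        (-c / Real.sin θ ^ 2) θ := by
    intro θ hθ
    have hθ' := hsub ⟨hθ.1.le, hθ.2.le⟩
    have hsθ : 0 < Real.sin θ := Real.sin_pos_of_pos_of_lt_pi hθ'.1 hθ'.2
    have h := ((Real.hasDerivAt_cos θ).div (Real.hasDerivAt_sin θ) hsθ.ne').const_mul c
    refine h.congr_deriv ?_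
    rw [show -Real.sin θ * Real.sin θ - Real.cos θ * Real.cos θ = -1 by
      nlinarith [Real.sin_sq_add_cos_sq θ]]
    ring
  obtain ⟨θ, hθmem, hθ⟩ := exists_hasDerivAt_eq_slope
    (fun θ : ℝ => c * (Real.cos θ / Real.sin θ)) (fun θ => -c / Real.sin θ ^ 2)
    hlt hcont hderiv
  have hθ' := hsub ⟨hθmem.1.le, hθmem.2.le⟩
  have hsθ : 0 < Real.sin θ := Real.sin_pos_of_pos_of_lt_pi hθ'.1 hθ'.2
  have hsθ1 : Real.sin θ ≤ 1 := Real.sin_le_one θ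
  have hs2' : Real.sin θ ^ 2 ≠ 0 := by positivity
  have hda : a2 - a1 ≠ 0 := by
    intro h'; linarith [sub_eq_zero.mp h']
  have hfa1 : c * (Real.cos a1 / Real.sin a1) = p1 := by
    rw [hp1, ← h1]
    field_simp [hs1.ne']
  have hfa2 : c * (Real.cos a2 / Real.sin a2) = p2 := by
    rw [hp2, ← h2]
    field_simp [hs2.ne']

  rw [hfa1, hfa2] at hθ
  -- hθ : -c / sin θ ^ 2 = (p2 - p1) / (a2 - a1)
  have h' : (-c / Real.sin θ ^ 2) * (a2 - a1) = p2 - p1 := by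
    rw [hθ]; exact div_mul_cancel₀ _ hda
  rw [div_mul_eq_mul_div, div_eq_iff hs2'] at h'
  -- h' : -c * (a2 - a1) = (p2 - p1) * sin θ ^ 2
  have hkey : (-c) * (2 * Real.pi) = b * Real.sin θ ^ 2 := by
    have hgoal : ((-c) * (2 * Real.pi) - b * Real.sin θ ^ 2) * (a2 - a1) = 0 := by
      linear_combination (2 * Real.pi) * h' - Real.sin θ ^ 2 * heq2
    rcases mul_eq_zero.mp hgoal with h'' | h''
    · linarith [sub_eq_zero.mp h'']
    · exact absurd h'' hda
  -- the bound |b| * sin θ ^ 2 < c in all cases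
  have hsqle : |b| * Real.sin θ ^ 2 ≤ |b| * Real.sin θ := by
    have := mul_nonneg hb0 (mul_nonneg hsθ.le (sub_nonneg.mpr hsθ1))
    nlinarith
  have hbound : |b| * Real.sin θ ^ 2 < c := by
    by_cases hcase1 : a2 ≤ Real.pi / 2
    · have hss : Real.sin θ < Real.sin a2 :=
        Real.strictMonoOn_sin ⟨by linarith [hθ'.1], by linarith [hθmem.2]⟩
          ⟨by linarith [ha2.1], hcase1⟩ hθmem.2
      have k1 : r2 * Real.sin θ < c := h2 ▸ mul_lt_mul_of_pos_left hss hr2p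
      have k3 : |b| * Real.sin θ ≤ r2 * Real.sin θ :=
        mul_le_mul_of_nonneg_right (by linarith) hsθ.le
      linarith
    · by_cases hcase2 : Real.pi / 2 ≤ a1
      · have hss : Real.sin θ < Real.sin a1 := by
          rw [← Real.sin_pi_sub θ, ← Real.sin_pi_sub a1]
          exact Real.strictMonoOn_sin
            ⟨by linarith [hθ'.2], by linarith [hθmem.1]⟩
            ⟨by linarith [ha1.2], by linarith⟩ (by linarith [hθmem.1])
        have k1 : r1 * Real.sin θ < c := h1 ▸ mul_lt_mul_of_pos_left hss hr1p
        have k3 : |b| * Real.sin θ ≤ r1 * Real.sin θ :=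
          mul_le_mul_of_nonneg_right (by linarith) hsθ.le
        linarith
      · push_neg at hcase1 hcase2
        have hcos1 : 0 < Real.cos a1 :=
          Real.cos_pos_of_mem_Ioo ⟨by linarith [ha1.1], hcase2⟩
        have hcos2 : Real.cos a2 < 0 :=
          Real.cos_neg_of_pi_div_two_lt_of_lt hcase1 (by linarith [ha2.2])
        have hp1pos : 0 < p1 := hp1 ▸ mul_pos hr1p hcos1
        have hp2neg : p2 < 0 := hp2 ▸ mul_neg_of_pos_of_neg hr2p hcos2
        have hdlt : a2 - a1 < Real.pi := by linarith [ha1.1, ha2.2]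
        have hprod1 : 0 ≤ (|b| + b) * (a2 - a1) :=
          mul_nonneg (by linarith [neg_le_abs b]) (by linarith)
        have hprod2 : 0 ≤ |b| * (Real.pi - (a2 - a1)) :=
          mul_nonneg hb0 (by linarith)
        have hp1small : p1 * (2 * Real.pi) < |b| * Real.pi := by nlinarith [heq2]
        have h2p1 : 2 * p1 < |b| := by nlinarith [hp1small, hπ]
        have hpc : p1 ^ 2 + c ^ 2 = r1 ^ 2 := by
          rw [hp1, ← h1]
          linear_combination r1 ^ 2 * Real.sin_sq_add_cos_sq a1
        have hcsq : |b| ^ 2 < c ^ 2 := by nlinarith [hpc, hp1pos, h2p1, hr1, hb0]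
        have hbc : |b| < c := by nlinarith [hcsq, hc, hb0]
        have k : 0 ≤ |b| * (1 - Real.sin θ ^ 2) :=
          mul_nonneg hb0 (by nlinarith [hsθ, hsθ1])
        nlinarith [k, hbc]
  -- contradiction
  have kfin : 0 ≤ (|b| + b) * Real.sin θ ^ 2 :=
    mul_nonneg (by linarith [neg_le_abs b]) (sq_nonneg _)
  have kc : 0 ≤ c * (Real.pi - 3) := mul_nonneg hc.le (by linarith)
  nlinarith [hkey, hbound, kfin, kc]

private lemma core (b c r1 r2 a1 a2 p1 p2 : ℝ) (hc : 0 < c)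
    (hr1 : 2 * (|b| + 1) ≤ r1) (hr2 : 2 * (|b| + 1) ≤ r2)
    (ha1 : a1 ∈ Set.Ioo 0 Real.pi) (ha2 : a2 ∈ Set.Ioo 0 Real.pi)
    (h1 : r1 * Real.sin a1 = c) (h2 : r2 * Real.sin a2 = c)
    (hp1 : p1 = r1 * Real.cos a1) (hp2 : p2 = r2 * Real.cos a2)
    (heq : p1 - p2 = b / (2 * Real.pi) * (a1 - a2)) : a1 = a2 := by
  rcases lt_trichotomy a1 a2 with h | h | h
  · exact (coreAux b c r1 r2 a1 a2 p1 p2 hc hr1 hr2 ha1 ha2 h1 h2 hp1 hp2 heq h).elim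
  · exact h
  · exact (coreAux b c r2 r1 a2 a1 p2 p1 hc hr2 hr1 ha2 ha1 h2 h1 hp2 hp1
      (by linear_combination -heq) h).elim

/-- **Injectivity of the dislocation coordinate change** (Lemma B.2(a)): with
`arg(x) ∈ (0, 2π)` the unique angle of `x ∉ Γ` and `ξ(x) = (x₁ − (b/2π) arg x, x₂)`,
there is `R₀ > 0` depending only on `b` such that for all `R ≥ R₀` the map `ξ` is injective
on `{x ∉ Γ : |x| ≥ R/4}`. -/
theorem stmt14 (b : ℝ) :
    ∃ R₀ : ℝ, 0 < R₀ ∧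
      ∀ A : ℝ × ℝ → ℝ,
        (∀ x : ℝ × ℝ, x ∉ branchCut →
          A x ∈ Set.Ioo 0 (2 * Real.pi) ∧
          x.1 = nrm2 x * Real.cos (A x) ∧ x.2 = nrm2 x * Real.sin (A x)) →
        ∀ R : ℝ, R₀ ≤ R →
          Set.InjOn (fun x : ℝ × ℝ => (x.1 - b / (2 * Real.pi) * A x, x.2))
            {x : ℝ × ℝ | x ∉ branchCut ∧ R / 4 ≤ nrm2 x} := by
  refine ⟨8 * (|b| + 1), by positivity, ?_⟩
  intro A hA R hR x hx y hy hxy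
  obtain ⟨hxΓ, hxR⟩ := hx
  obtain ⟨hyΓ, hyR⟩ := hy
  have hπ := Real.pi_pos
  obtain ⟨hAx, hx1, hx2⟩ := hA x hxΓ
  obtain ⟨hAy, hy1, hy2⟩ := hA y hyΓ
  have hxy' : (x.1 - b / (2 * Real.pi) * A x, x.2)
      = (y.1 - b / (2 * Real.pi) * A y, y.2) := hxy
  injection hxy' with h1 h2
  have heq : x.1 - y.1 = b / (2 * Real.pi) * (A x - A y) := by linear_combination h1
  have hnx : 2 * (|b| + 1) ≤ nrm2 x := le_trans (by linarith) hxR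
  have hny : 2 * (|b| + 1) ≤ nrm2 y := le_trans (by linarith) hyR
  have hnxp : 0 < nrm2 x := lt_of_lt_of_le (by positivity) hnx
  have hnyp : 0 < nrm2 y := lt_of_lt_of_le (by positivity) hny
  have hfin : A x = A y → x = y := by
    intro hAeq
    rw [hAeq, sub_self, mul_zero] at heq
    exact Prod.ext_iff.mpr ⟨by linarith, h2⟩
  rcases lt_trichotomy x.2 0 with hc | hc | hc
  · -- x₂ < 0 : reflect, apply core with -b
    have hsx : Real.sin (A x) < 0 := by
      by_contra h'
      push_neg at h'
      have := mul_nonneg hnxp.le h'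
      linarith [hx2]
    have hsy : Real.sin (A y) < 0 := by
      by_contra h'
      push_neg at h'
      have := mul_nonneg hnyp.le h'
      nlinarith [hy2, h2]
    have hgx : Real.pi < A x := aux_gt_pi hAx hsx
    have hgy : Real.pi < A y := aux_gt_pi hAy hsy
    have key := core (-b) (-x.2) (nrm2 x) (nrm2 y) (A x - Real.pi) (A y - Real.pi)
      (-x.1) (-y.1) (by linarith)
      (by rw [abs_neg]; exact hnx) (by rw [abs_neg]; exact hny)
      ⟨by linarith, by linarith [hAx.2]⟩ ⟨by linarith, by linarith [hAy.2]⟩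
      (by rw [Real.sin_sub_pi]; linear_combination hx2)
      (by rw [Real.sin_sub_pi]; linear_combination h2 + hy2)
      (by rw [Real.cos_sub_pi]; linear_combination -hx1)
      (by rw [Real.cos_sub_pi]; linear_combination -hy1)
      (by linear_combination -heq)
    exact hfin (by linarith)
  · -- x₂ = 0 : both angles are π
    have hsx : Real.sin (A x) = 0 := by
      have : nrm2 x * Real.sin (A x) = 0 := by linarith [hx2]
      rcases mul_eq_zero.mp this with h' | h'
      · exact absurd h' hnxp.ne'
      · exact h'
    have hsy : Real.sin (A y) = 0 := by
      have : nrm2 y * Real.sin (A y) = 0 := by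
        have : y.2 = 0 := by linarith
        linarith [hy2, this]
      rcases mul_eq_zero.mp this with h' | h'
      · exact absurd h' hnyp.ne'
      · exact h'
    exact hfin ((aux_eq_pi hAx hsx).trans (aux_eq_pi hAy hsy).symm)
  · -- x₂ > 0
    have hsx : 0 < Real.sin (A x) := by
      by_contra h'
      push_neg at h'
      have := mul_nonpos_of_nonneg_of_nonpos hnxp.le h'
      linarith [hx2]
    have hsy : 0 < Real.sin (A y) := by
      by_contra h'
      push_neg at h'
      have := mul_nonpos_of_nonneg_of_nonpos hnyp.le h'
      nlinarith [hy2, h2]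
    have key := core b x.2 (nrm2 x) (nrm2 y) (A x) (A y) x.1 y.1 hc hnx hny
      ⟨hAx.1, aux_lt_pi hAx hsx⟩ ⟨hAy.1, aux_lt_pi hAy hsy⟩
      hx2.symm (by linear_combination -hy2 - h2) hx1 hy1 heq
    exact hfin key
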